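/- Define η(p,T) = -log p + 2 tanh⁻¹(α) + (5/2 + T_i/T)·α + (5/2) log T with α = (1 + κ p T^{-5/2} e^{T_i/T})^{-1/2}. Then ∂η/∂T at fixed p equals ((1+α)/T)·(5/2 + (α/2)(1-α)(5/2 + T_i/T)²), which is ≥ (5/(2T))(1+α) > 0. -/

import Mathlib

/-- Inverse hyperbolic tangent. -/
noncomputable def artanh (x : ℝ) : ℝ := (1 / 2) * Real.log ((1 + x) / (1 - x))

/-- Saha ionization degree. -/
noncomputable def sahaAlpha (κ Ti p T : ℝ) : ℝ :=
  (1 + κ * p * T ^ (-(5/2) : ℝ) * Real.exp (Ti / T)) ^ (-(1/2) : ℝ)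

/-- Dimensionless entropy η(p,T) = -log p + 2 tanh⁻¹ α + (5/2 + T_i/T)α + (5/2) log T. -/
noncomputable def eta (κ Ti p T : ℝ) : ℝ :=
  -Real.log p + 2 * artanh (sahaAlpha κ Ti p T) + (5/2 + Ti / T) * sahaAlpha κ Ti p T
    + (5/2) * Real.log T

lemma sahaAlpha_hasDerivAt (κ Ti p T : ℝ) (hκ : 0 < κ) (hp : 0 < p) (hT : 0 < T) :
    HasDerivAt (fun T' : ℝ => sahaAlpha κ Ti p T')
      (sahaAlpha κ Ti p T * (1 - (sahaAlpha κ Ti p T)^2) * (5/2 + Ti/T) / (2*T)) T := by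
  have hT' := hT.ne'
  set E : ℝ := κ * p * T ^ (-(5/2) : ℝ) * Real.exp (Ti / T) with hEdef
  have hEpos : 0 < E := by positivity
  set A := sahaAlpha κ Ti p T with hAdef
  have hApos : 0 < A := Real.rpow_pos_of_pos (by linarith) _
  have hAsq : A ^ 2 * (1 + E) = 1 := by
    rw [hAdef, sahaAlpha, ← hEdef, ← Real.rpow_natCast _ 2, ← Real.rpow_mul (by linarith)]
    norm_num
    rw [Real.rpow_neg_one]
    exact inv_mul_cancel₀ (by linarith)
  have hX : ((1:ℝ) + E) ^ (-(1/2 : ℝ) - 1) = A ^ 3 := by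
    rw [hAdef, sahaAlpha, ← hEdef, ← Real.rpow_natCast _ 3, ← Real.rpow_mul (by linarith)]
    norm_num
  have hTi' : HasDerivAt (fun y : ℝ => Ti / y) (-(Ti / T ^ 2)) T := by
    simpa [div_eq_mul_inv, mul_comm] using ((hasDerivAt_inv hT').const_mul Ti)
  have hexp : HasDerivAt (fun y : ℝ => Real.exp (Ti / y))
      (Real.exp (Ti / T) * (-(Ti / T ^ 2))) T := hTi'.exp
  have hpow : HasDerivAt (fun y : ℝ => y ^ (-(5/2) : ℝ))
      (-(5/2) * T ^ (-(5/2) - 1 : ℝ)) T := Real.hasDerivAt_rpow_const (Or.inl hT')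
  have hmul : HasDerivAt (fun y : ℝ => κ * p * y ^ (-(5/2) : ℝ) * Real.exp (Ti / y))
      ((κ * p * (-(5/2) * T ^ (-(5/2) - 1 : ℝ))) * Real.exp (Ti / T)
        + (κ * p * T ^ (-(5/2) : ℝ)) * (Real.exp (Ti / T) * (-(Ti / T ^ 2)))) T := by
    exact (hpow.const_mul (κ * p)).mul hexp
  have hf : HasDerivAt (fun y : ℝ => 1 + κ * p * y ^ (-(5/2) : ℝ) * Real.exp (Ti / y))
      ((κ * p * (-(5/2) * T ^ (-(5/2) - 1 : ℝ))) * Real.exp (Ti / T)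
        + (κ * p * T ^ (-(5/2) : ℝ)) * (Real.exp (Ti / T) * (-(Ti / T ^ 2)))) T :=
    hmul.const_add 1
  have hraw := hf.rpow_const (p := (-(1/2) : ℝ)) (Or.inl (by rw [← hEdef]; linarith))
  rw [← hEdef] at hraw
  have hrpow : T ^ (-(5/2) - 1 : ℝ) = T ^ (-(5/2) : ℝ) * T⁻¹ := by
    rw [show (-(5/2) - 1 : ℝ) = -(5/2) + (-1) by ring, Real.rpow_add hT, Real.rpow_neg_one]
  have hA3E : A ^ 3 * E = A * (1 - A ^ 2) := by linear_combination A * hAsq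
  have hd : κ * p * (-(5/2) * T ^ (-(5/2) - 1 : ℝ)) * Real.exp (Ti / T) +
      κ * p * T ^ (-(5/2) : ℝ) * (Real.exp (Ti / T) * -(Ti / T ^ 2))
      = -(E * (5/2 + Ti / T) / T) := by
    rw [hrpow, hEdef]
    field_simp
    ring
  convert hraw using 1
  · rfl
  rw [hd, hX, ← hA3E]
  ring

/-- ∂η/∂T at fixed p equals ((1+α)/T)(5/2 + (α/2)(1-α)(5/2+T_i/T)²), which is
≥ (5/(2T))(1+α) > 0. -/
theorem eta_deriv_T (κ Ti p T : ℝ) (hκ : 0 < κ) (hTi : 0 < Ti)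
    (hp : 0 < p) (hT : 0 < T) :
    HasDerivAt (fun T' : ℝ => eta κ Ti p T')
      (((1 + sahaAlpha κ Ti p T) / T) *
        (5/2 + (sahaAlpha κ Ti p T / 2) * (1 - sahaAlpha κ Ti p T) * (5/2 + Ti / T) ^ 2)) T ∧
    ((1 + sahaAlpha κ Ti p T) / T) *
        (5/2 + (sahaAlpha κ Ti p T / 2) * (1 - sahaAlpha κ Ti p T) * (5/2 + Ti / T) ^ 2)
      ≥ (5 / (2 * T)) * (1 + sahaAlpha κ Ti p T) ∧
    0 < (5 / (2 * T)) * (1 + sahaAlpha κ Ti p T) := by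
  have hT' := hT.ne'
  have hEpos : 0 < κ * p * T ^ (-(5/2) : ℝ) * Real.exp (Ti / T) := by positivity
  set A := sahaAlpha κ Ti p T with hAdef
  have hApos : 0 < A := Real.rpow_pos_of_pos (by linarith) _
  have hA1 : A < 1 := Real.rpow_lt_one_of_one_lt_of_neg (by linarith) (by norm_num)
  have h1A : 0 < 1 - A := by linarith
  have h1A' : 0 < 1 + A := by linarith
  set A' : ℝ := A * (1 - A ^ 2) * (5/2 + Ti/T) / (2*T) with hA'def
  have hα : HasDerivAt (fun T' : ℝ => sahaAlpha κ Ti p T') A' T :=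
    sahaAlpha_hasDerivAt κ Ti p T hκ hp hT
  -- the derivative, raw form
  have hnum : HasDerivAt (fun y : ℝ => 1 + sahaAlpha κ Ti p y) A' T := hα.const_add 1
  have hden : HasDerivAt (fun y : ℝ => 1 - sahaAlpha κ Ti p y) (-A') T := hα.const_sub 1
  have hq := hnum.div hden (by rw [← hAdef]; exact h1A.ne')
  have hlog := hq.log (by show (1 + sahaAlpha κ Ti p T) / (1 - sahaAlpha κ Ti p T) ≠ 0; rw [← hAdef]; exact (div_pos h1A' h1A).ne')
  have hartanh := hlog.const_mul (1/2 : ℝ)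
  have h2artanh := hartanh.const_mul (2 : ℝ)
  have hTi' : HasDerivAt (fun y : ℝ => Ti / y) (-(Ti / T ^ 2)) T := by
    simpa [div_eq_mul_inv, mul_comm] using ((hasDerivAt_inv hT').const_mul Ti)
  have hc : HasDerivAt (fun y : ℝ => 5/2 + Ti / y) (-(Ti / T ^ 2)) T := hTi'.const_add (5/2)
  have h3 := hc.mul hα
  have hlogT := (Real.hasDerivAt_log hT').const_mul (5/2 : ℝ)
  have htotal := ((h2artanh.const_add (-Real.log p)).add h3).add hlogT
  refine ⟨?_, ?_, ?_⟩
  · have hfun : (fun T' : ℝ => eta κ Ti p T') =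
        (fun y : ℝ => (-Real.log p + 2 * ((1/2 : ℝ) *
            Real.log ((1 + sahaAlpha κ Ti p y) / (1 - sahaAlpha κ Ti p y)))
          + (5/2 + Ti / y) * sahaAlpha κ Ti p y) + (5/2) * Real.log y) := by
      funext y
      simp only [eta, artanh]
    rw [hfun]
    refine htotal.congr_deriv ?_
    simp only [Pi.div_apply]
    rw [← hAdef, hA'def]
    field_simp
    ring
  · have key : ((1 + A) / T) * (5/2 + (A / 2) * (1 - A) * (5/2 + Ti / T) ^ 2)
        = (5 / (2 * T)) * (1 + A)
          + ((1 + A) / T) * ((A / 2) * (1 - A) * (5/2 + Ti / T) ^ 2) := by ring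
    have h1 : 0 ≤ (1 + A) / T := by positivity
    have h2 : 0 ≤ (A / 2) * (1 - A) * (5/2 + Ti / T) ^ 2 :=
      mul_nonneg (mul_nonneg (by positivity) (by linarith)) (sq_nonneg _)
    rw [ge_iff_le, key]
    nlinarith [mul_nonneg h1 h2]
  · have h5 : 0 < (5 : ℝ) / (2 * T) := div_pos (by norm_num) (by linarith)
    exact mul_pos h5 (by linarith)
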